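/- With notation as in the augmented Lagrangian Uzawa iteration, the velocity error satisfies ‖u^k − u‖_A ≤ √ε ‖p^k − p‖, where ‖v‖_A = √(A v, v). -/

import Mathlib

open scoped RealInnerProductSpace

/-- Velocity error of the augmented Lagrangian Uzawa iteration:
`‖uᵏ − u‖_A ≤ √ε ‖pᵏ − p‖`, where `‖v‖_A = √⟪Av, v⟫`. -/
theorem uzawa_velocity_error_bound
    {V W : Type*}
    [NormedAddCommGroup V] [InnerProductSpace ℝ V] [FiniteDimensional ℝ V]
    [NormedAddCommGroup W] [InnerProductSpace ℝ W] [FiniteDimensional ℝ W]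
    (A : V →ₗ[ℝ] V)
    (hA_sym : ∀ x y : V, ⟪A x, y⟫ = ⟪x, A y⟫)
    (hA_pos : ∀ x : V, x ≠ 0 → 0 < ⟪A x, x⟫)
    (B : V →ₗ[ℝ] W) (hB_surj : Function.Surjective B)
    (Bs : W →ₗ[ℝ] V) (hBs : ∀ (q : W) (x : V), ⟪Bs q, x⟫ = ⟪q, B x⟫)
    (f : V) (usol : V) (psol : W)
    (hsol1 : A usol + Bs psol = f) (hsol2 : B usol = 0)
    (ε : ℝ) (hε : 0 < ε)
    (u : ℕ → V) (p : ℕ → W) (hp0 : p 0 = 0)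
    (hu : ∀ k : ℕ, (A + ε⁻¹ • (Bs ∘ₗ B)) (u (k + 1)) = f - Bs (p k))
    (hp : ∀ k : ℕ, p (k + 1) = p k - ε⁻¹ • B (u (k + 1))) :
    ∀ k : ℕ,
      Real.sqrt ⟪A (u (k + 1) - usol), u (k + 1) - usol⟫ ≤
        Real.sqrt ε * ‖p (k + 1) - psol‖ := by
  intro k
  set e : V := u (k + 1) - usol with he
  set b : W := B e with hb
  set q : W := p k - psol with hq
  have hBe : b = B (u (k + 1)) := by
    simp [hb, he, map_sub, hsol2]
  have hAusol : A usol = f - Bs psol := eq_sub_of_add_eq hsol1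
  have huk := hu k
  simp only [LinearMap.add_apply, LinearMap.smul_apply, LinearMap.comp_apply] at huk
  have h1 : A e + ε⁻¹ • Bs b = Bs psol - Bs (p k) := by
    rw [hBe, he, map_sub, hAusol, sub_add_eq_add_sub, huk]
    abel
  -- scalar form
  have key : ⟪A e, e⟫ + ε⁻¹ * ‖b‖ ^ 2 = -⟪q, b⟫ := by
    have := congrArg (fun v => (inner ℝ v e : ℝ)) h1
    simp only [inner_add_left, real_inner_smul_left, inner_sub_left, hBs] at this
    rw [real_inner_self_eq_norm_sq] at this
    simp only [hq, inner_sub_left]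
    linarith [this]
  -- error for p
  have hr : p (k + 1) - psol = q - ε⁻¹ • b := by
    rw [hp k, ← hBe, hq]
    abel
  have ha : 0 ≤ ⟪A e, e⟫ := by
    by_cases h : e = 0
    · simp [h]
    · exact (hA_pos e h).le
  have hnormr : ‖p (k + 1) - psol‖ ^ 2 = ‖q‖ ^ 2 - 2 * (ε⁻¹ * ⟪q, b⟫) + (ε⁻¹) ^ 2 * ‖b‖ ^ 2 := by
    rw [hr, norm_sub_sq_real, real_inner_smul_right, norm_smul]
    rw [mul_pow, Real.norm_eq_abs, sq_abs]
  have hmain : ⟪A e, e⟫ ≤ ε * ‖p (k + 1) - psol‖ ^ 2 := by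
    rw [hnormr]
    have hb2 : 0 ≤ ‖b‖ ^ 2 := by positivity
    have hq2 : 0 ≤ ‖q‖ ^ 2 := by positivity
    have hεinv : 0 < ε⁻¹ := inv_pos.mpr hε
    have hεε : ε * ε⁻¹ = 1 := mul_inv_cancel₀ hε.ne'
    nlinarith [key, mul_nonneg hεinv.le hb2, mul_nonneg hε.le hq2]
  calc Real.sqrt ⟪A e, e⟫ ≤ Real.sqrt (ε * ‖p (k + 1) - psol‖ ^ 2) :=
        Real.sqrt_le_sqrt hmain
    _ = Real.sqrt ε * ‖p (k + 1) - psol‖ := by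
        rw [Real.sqrt_mul hε.le, Real.sqrt_sq (norm_nonneg _)]
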